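/- Let ε ∈ (0, 1/2), let K ⊆ ℝ^d be a convex body with 0 ∈ K ⊆ d²B, and let 0 < δ < 1/(4d⁴). If Y ⊆ ∂K is a finite set such that (1 − ε/2)·Φ_δ(K) ⊆ conv(Φ_δ(Y)), then (1−ε)K ⊆ conv(Y). -/
import Mathlib


open scoped Pointwise

/-- For `δ > 0`, `φ_δ(r) = 2 / (1 + √(1 + 4δr²))`, the unique positive root of
`φ + δr²φ² = 1`. -/
noncomputable def phi (δ r : ℝ) : ℝ := 2 / (1 + Real.sqrt (1 + 4 * δ * r ^ 2))

/-- The map `Φ_δ : ℝ^d → ℝ^d`, `Φ_δ(x) = φ_δ(|x|) • x`. -/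
noncomputable def Phi (δ : ℝ) {d : ℕ} (x : EuclideanSpace ℝ (Fin d)) :
    EuclideanSpace ℝ (Fin d) := phi δ ‖x‖ • x

lemma phi_pos {δ : ℝ} (hδ : 0 ≤ δ) (r : ℝ) : 0 < phi δ r := by
  have h1 : (0:ℝ) ≤ 1 + 4 * δ * r ^ 2 := by positivity
  have := Real.sqrt_nonneg (1 + 4 * δ * r ^ 2)
  unfold phi; positivity

lemma phi_le_one {δ : ℝ} (hδ : 0 ≤ δ) (r : ℝ) : phi δ r ≤ 1 := by
  have h1 : (1:ℝ) ≤ 1 + 4 * δ * r ^ 2 := by nlinarith [sq_nonneg r]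
  have h2 : (1:ℝ) ≤ Real.sqrt (1 + 4 * δ * r ^ 2) := by
    simpa using Real.sqrt_le_sqrt h1
  rw [phi, div_le_one (by linarith)]
  linarith

lemma phi_identity {δ : ℝ} (hδ : 0 ≤ δ) (r : ℝ) :
    phi δ r + δ * r ^ 2 * (phi δ r) ^ 2 = 1 := by
  set s := Real.sqrt (1 + 4 * δ * r ^ 2) with hs
  have h0 : (0:ℝ) ≤ 1 + 4 * δ * r ^ 2 := by positivity
  have hsq : s ^ 2 = 1 + 4 * δ * r ^ 2 := Real.sq_sqrt h0
  have hs1 : (1:ℝ) ≤ s := by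
    rw [hs]; simpa using Real.sqrt_le_sqrt (by nlinarith [sq_nonneg r] : (1:ℝ) ≤ 1 + 4*δ*r^2)
  have hne : 1 + s ≠ 0 := by linarith
  rw [phi]
  field_simp
  nlinarith [hsq]

lemma norm_Phi {δ : ℝ} (hδ : 0 ≤ δ) {d : ℕ} (y : EuclideanSpace ℝ (Fin d)) :
    ‖Phi δ y‖ = phi δ ‖y‖ * ‖y‖ := by
  rw [Phi, norm_smul, Real.norm_eq_abs, abs_of_pos (phi_pos hδ _)]

lemma norm_Phi_le {δ : ℝ} (hδ : 0 ≤ δ) {d : ℕ} (y : EuclideanSpace ℝ (Fin d)) :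
    ‖Phi δ y‖ ≤ ‖y‖ := by
  rw [norm_Phi hδ]
  nlinarith [phi_le_one hδ ‖y‖, phi_pos hδ ‖y‖, norm_nonneg y]

lemma Phi_eq {δ : ℝ} (hδ : 0 ≤ δ) {d : ℕ} (y : EuclideanSpace ℝ (Fin d)) :
    Phi δ y = (1 - δ * ‖Phi δ y‖ ^ 2) • y := by
  have h := phi_identity hδ ‖y‖
  rw [norm_Phi hδ, Phi]
  congr 1
  nlinarith [h]

lemma aux {δ : ℝ} {d : ℕ} (hδ : 0 < δ) (Y : Set (EuclideanSpace ℝ (Fin d)))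
    (hYfin : Y.Finite) (hYb : ∀ y ∈ Y, δ * ‖y‖ ^ 2 ≤ 1/4)
    (v : EuclideanSpace ℝ (Fin d)) (hv : v ∈ convexHull ℝ (Phi δ '' Y)) :
    ∃ T : ℝ, 0 < T ∧ T ≤ 1 - δ * ‖v‖ ^ 2 ∧ T⁻¹ • v ∈ convexHull ℝ Y := by
  classical
  set t : Finset (EuclideanSpace ℝ (Fin d)) := hYfin.toFinset.image (Phi δ) with ht
  have himg : Phi δ '' Y = ↑t := by rw [ht, Finset.coe_image, Set.Finite.coe_toFinset]
  rw [himg, Finset.mem_convexHull'] at hv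
  obtain ⟨w, hw0, hw1, hwv⟩ := hv
  have hzY : ∀ z ∈ t, ∃ y ∈ Y, Phi δ y = z := by
    intro z hz
    rw [ht, Finset.mem_image] at hz
    obtain ⟨y, hy, hyz⟩ := hz
    exact ⟨y, hYfin.mem_toFinset.mp hy, hyz⟩
  have hzb : ∀ z ∈ t, δ * ‖z‖ ^ 2 ≤ 1/4 := by
    intro z hz
    obtain ⟨y, hyY, rfl⟩ := hzY z hz
    have h1 := norm_Phi_le hδ.le y
    have h2 := hYb y hyY
    nlinarith [norm_nonneg (Phi δ y), norm_nonneg y,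
      mul_le_mul h1 h1 (norm_nonneg (Phi δ y)) (norm_nonneg y), hδ.le]
  set g : EuclideanSpace ℝ (Fin d) → EuclideanSpace ℝ (Fin d) :=
    fun z => (1 - δ * ‖z‖ ^ 2)⁻¹ • z with hg
  have hgY : ∀ z ∈ t, g z ∈ Y := by
    intro z hz
    obtain ⟨y, hyY, rfl⟩ := hzY z hz
    have hc : (0:ℝ) < 1 - δ * ‖Phi δ y‖ ^ 2 := by linarith [hzb _ hz]
    have key : g (Phi δ y) = y := by
      calc g (Phi δ y) = (1 - δ * ‖Phi δ y‖ ^ 2)⁻¹ • Phi δ y := rfl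
        _ = (1 - δ * ‖Phi δ y‖ ^ 2)⁻¹ • ((1 - δ * ‖Phi δ y‖ ^ 2) • y) := by
            rw [← Phi_eq hδ.le]
        _ = y := inv_smul_smul₀ hc.ne' y
    rw [key]; exact hyY
  set μ : EuclideanSpace ℝ (Fin d) → ℝ := fun z => w z * (1 - δ * ‖z‖ ^ 2) with hμ
  set T : ℝ := ∑ z ∈ t, μ z with hT
  have hμ0 : ∀ z ∈ t, 0 ≤ μ z := fun z hz =>
    mul_nonneg (hw0 z hz) (by linarith [hzb z hz])
  have hT34 : 3/4 ≤ T := by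
    calc (3/4 : ℝ) = ∑ z ∈ t, 3/4 * w z := by rw [← Finset.mul_sum, hw1, mul_one]
      _ ≤ ∑ z ∈ t, μ z := by
          refine Finset.sum_le_sum fun z hz => ?_
          have := hzb z hz
          have := hw0 z hz
          rw [hμ]; nlinarith
  have hT0 : 0 < T := by linarith
  have hTub : T ≤ 1 - δ * ‖v‖ ^ 2 := by
    have hnorm : ‖v‖ ≤ ∑ z ∈ t, w z * ‖z‖ := by
      rw [← hwv]
      have := (convexOn_univ_norm (E := EuclideanSpace ℝ (Fin d))).map_sum_le hw0 hw1
        (fun z _ => Set.mem_univ z) (p := id)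
      simpa using this
    have hsq : (∑ z ∈ t, w z * ‖z‖) ^ 2 ≤ ∑ z ∈ t, w z * ‖z‖ ^ 2 := by
      have := (convexOn_pow (𝕜 := ℝ) 2).map_sum_le hw0 hw1
        (fun z _ => norm_nonneg z) (p := fun z => ‖z‖)
      simpa [smul_eq_mul] using this
    have hv2 : ‖v‖ ^ 2 ≤ ∑ z ∈ t, w z * ‖z‖ ^ 2 := by
      refine le_trans (pow_le_pow_left₀ (norm_nonneg v) hnorm 2) hsq
    have hTeq : T = 1 - δ * ∑ z ∈ t, w z * ‖z‖ ^ 2 := by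
      rw [hT, Finset.mul_sum, ← hw1, ← Finset.sum_sub_distrib]
      exact Finset.sum_congr rfl fun z _ => by rw [hμ]; ring
    rw [hTeq]
    nlinarith
  have hsum : ∑ z ∈ t, μ z • g z = v := by
    rw [← hwv]
    refine Finset.sum_congr rfl fun z hz => ?_
    have hc : (0:ℝ) < 1 - δ * ‖z‖ ^ 2 := by linarith [hzb z hz]
    rw [hg, hμ]
    simp only [smul_smul]
    congr 1
    field_simp
  refine ⟨T, hT0, hTub, ?_⟩
  have hmem := Finset.centerMass_mem_convexHull t hμ0 hT0 hgY
  rwa [Finset.centerMass, hsum] at hmem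

/-- Let `ε ∈ (0,1/2)`, let `K ⊆ ℝ^d` be a convex body with `0 ∈ K ⊆ d²B`, and let
`0 < δ < 1/(4d⁴)`. If `Y ⊆ ∂K` is a finite set with
`(1 - ε/2)·Φ_δ(K) ⊆ conv(Φ_δ(Y))`, then `(1-ε)K ⊆ conv(Y)`. -/
theorem stmt7 (d : ℕ) (ε δ : ℝ) (hε : 0 < ε) (hε2 : ε < 1 / 2)
    (K : Set (EuclideanSpace ℝ (Fin d)))
    (hKcomp : IsCompact K) (hKconv : Convex ℝ K) (hKint : (interior K).Nonempty)
    (h0 : (0 : EuclideanSpace ℝ (Fin d)) ∈ K)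
    (hKB : K ⊆ Metric.closedBall 0 ((d : ℝ) ^ 2))
    (hδ : 0 < δ) (hδ2 : δ < 1 / (4 * (d : ℝ) ^ 4))
    (Y : Set (EuclideanSpace ℝ (Fin d))) (hYfin : Y.Finite) (hY : Y ⊆ frontier K)
    (hsub : (1 - ε / 2) • (Phi δ '' K) ⊆ convexHull ℝ (Phi δ '' Y)) :
    (1 - ε) • K ⊆ convexHull ℝ Y := by
  have hd4 : (0:ℝ) < (d : ℝ) ^ 4 := by
    rcases Nat.eq_zero_or_pos d with h | h
    · exfalso; subst h; norm_num at hδ2; linarith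
    · have : (0:ℝ) < (d:ℝ) := by exact_mod_cast h
      positivity
  have hδ4 : δ * (d:ℝ) ^ 4 < 1/4 := by
    rw [lt_div_iff₀ (by positivity)] at hδ2
    nlinarith
  have hKbound : ∀ x ∈ K, δ * ‖x‖ ^ 2 ≤ 1/4 := by
    intro x hx
    have hxb : ‖x‖ ≤ (d:ℝ) ^ 2 := by
      have := hKB hx
      rwa [Metric.mem_closedBall, dist_zero_right] at this
    nlinarith [norm_nonneg x]
  have hYb : ∀ y ∈ Y, δ * ‖y‖ ^ 2 ≤ 1/4 := by
    intro y hy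
    have hyK : y ∈ K := by
      have := (hY hy).1
      rwa [hKcomp.isClosed.closure_eq] at this
    exact hKbound y hyK
  -- 0 ∈ convexHull Y
  have h0Phi : (0 : EuclideanSpace ℝ (Fin d)) ∈ convexHull ℝ (Phi δ '' Y) := by
    have : (1 - ε / 2) • Phi δ (0 : EuclideanSpace ℝ (Fin d)) ∈
        (1 - ε / 2) • (Phi δ '' K) :=
      Set.smul_mem_smul_set (Set.mem_image_of_mem _ h0)
    have h0' := hsub this
    simpa [Phi] using h0'
  have h0conv : (0 : EuclideanSpace ℝ (Fin d)) ∈ convexHull ℝ Y := by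
    obtain ⟨T₀, hT₀, -, hmem⟩ := aux hδ Y hYfin hYb 0 h0Phi
    simpa using hmem
  -- main part
  rintro x ⟨x₀, hx₀, rfl⟩
  set z₀ := Phi δ x₀ with hz₀
  have hvmem : (1 - ε / 2) • z₀ ∈ convexHull ℝ (Phi δ '' Y) :=
    hsub (Set.smul_mem_smul_set (Set.mem_image_of_mem _ hx₀))
  obtain ⟨T, hT0, hTub, hmem⟩ := aux hδ Y hYfin hYb _ hvmem
  set a : ℝ := δ * ‖z₀‖ ^ 2 with ha
  have ha0 : 0 ≤ a := by positivity
  have ha4 : a ≤ 1/4 := by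
    have h1 := norm_Phi_le hδ.le x₀
    have h2 := hKbound x₀ hx₀
    rw [ha, hz₀]
    nlinarith [norm_nonneg (Phi δ x₀), norm_nonneg x₀,
      mul_le_mul h1 h1 (norm_nonneg (Phi δ x₀)) (norm_nonneg x₀), hδ.le]
  have hvnorm : ‖(1 - ε / 2) • z₀‖ ^ 2 = (1 - ε/2) ^ 2 * ‖z₀‖ ^ 2 := by
    rw [norm_smul, Real.norm_eq_abs, abs_of_pos (by linarith), mul_pow]
  have hTub' : T ≤ 1 - (1 - ε/2) ^ 2 * a := by
    rw [hvnorm] at hTub; rw [ha]; linarith [hTub]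
  set c : ℝ := T⁻¹ * ((1 - ε / 2) * (1 - a)) with hc
  have hcx : c • x₀ ∈ convexHull ℝ Y := by
    have heq : T⁻¹ • ((1 - ε / 2) • z₀) = c • x₀ := by
      have := Phi_eq hδ.le x₀
      rw [hz₀, this, smul_smul, smul_smul, hc, ha, hz₀]
      congr 1
      ring
    rwa [heq] at hmem
  have hclb : 1 - ε ≤ c := by
    rw [hc, inv_mul_eq_div, le_div_iff₀ hT0]
    have h1 : (1 - ε) * T ≤ (1 - ε) * (1 - (1 - ε/2) ^ 2 * a) := by
      apply mul_le_mul_of_nonneg_left hTub' (by linarith)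
    have h2 : (1 - ε) * (1 - (1 - ε/2) ^ 2 * a) ≤ (1 - ε / 2) * (1 - a) := by
      nlinarith [mul_nonneg hε.le (by linarith : (0:ℝ) ≤ 1 - 3*a),
        mul_nonneg (mul_nonneg ha0 (sq_nonneg ε)) (by linarith : (0:ℝ) ≤ 5 - ε)]
    linarith
  have hc0 : 0 < c := by linarith
  set θ : ℝ := (1 - ε) / c with hθ
  have hθ0 : 0 ≤ θ := div_nonneg (by linarith) hc0.le
  have hθ1 : θ ≤ 1 := by rw [hθ, div_le_one hc0]; exact hclb
  have := (convex_convexHull ℝ Y) hcx h0conv hθ0 (by linarith : (0:ℝ) ≤ 1 - θ)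
    (by ring)
  have hfin : θ • (c • x₀) + (1 - θ) • (0 : EuclideanSpace ℝ (Fin d))
      = (1 - ε) • x₀ := by
    rw [smul_zero, add_zero, smul_smul, hθ, div_mul_cancel₀ _ hc0.ne']
  rwa [hfin] at this
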